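/- Let p be a prime with p ≡ 3 (mod 4), and let G_p(λ) = Σ_{m=0}^{(p+1)/4} ((−1/4)_m (1/4)_m)/((1/2)_m m!) λ^m, viewed as a polynomial over 𝔽_p (all its coefficients are p-integral). Then G_p is reciprocal modulo p: λ^{(p+1)/4} · G_p(1/λ) ≡ G_p(λ) (mod p), i.e. the coefficient of λ^j in G_p equals the coefficient of λ^{(p+1)/4 − j} for all 0 ≤ j ≤ (p+1)/4. -/
import Mathlib


/-- Pochhammer symbol `(x)_m = x(x+1)⋯(x+m−1)`. -/
def poch (x : ℚ) : ℕ → ℚ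
  | 0 => 1
  | m + 1 => poch x m * (x + m)

open Finset

private def Eprod (k : ℕ) : ℤ := ∏ i ∈ Finset.range k, (1 - 2 * (i : ℤ))

private lemma poch_pos {x : ℚ} (hx : 0 < x) : ∀ m, 0 < poch x m
  | 0 => one_pos
  | m + 1 => mul_pos (poch_pos hx m) (by positivity)

private lemma keyA (m : ℕ) :
    poch (-1/4) m * poch (1/4) m * (4 ^ m * (2 * m).factorial) =
      (Eprod (2 * m) : ℚ) * (poch (1/2) m * m.factorial) := by
  induction m with
  | zero => simp [poch, Eprod]
  | succ m ih =>
    have h2 : 2 * (m + 1) = 2 * m + 1 + 1 := by ring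
    rw [h2]
    simp only [poch, Eprod, Finset.prod_range_succ, Nat.factorial_succ]
    rw [show Eprod (2 * m) = ∏ i ∈ Finset.range (2 * m), (1 - 2 * (i : ℤ)) from rfl] at ih
    push_cast
    push_cast at ih
    linear_combination ((-1/4 + (m : ℚ)) * (1/4 + m) * 4 * ((2 * m + 1 + 1) * (2 * m + 1))) * ih

private lemma keyB (m : ℕ) :
    poch (-1/4) m * poch (1/4) m / (poch (1/2) m * m.factorial) =
      (Eprod (2 * m) : ℚ) / (4 ^ m * (2 * m).factorial) := by
  have h1 : poch (1/2) m * (m.factorial : ℚ) ≠ 0 := by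
    have := poch_pos (x := 1/2) (by norm_num) m
    have := m.factorial_pos
    positivity
  have h2 : (4 : ℚ) ^ m * ((2 * m).factorial : ℚ) ≠ 0 := by
    have := (2 * m).factorial_pos
    positivity
  rw [div_eq_div_iff h1 h2]
  linarith [keyA m]

private lemma castq (p : ℕ) [Fact p.Prime] (a b : ℤ) (hb0 : b ≠ 0) (hb : ¬ (p : ℤ) ∣ b) :
    ¬ p ∣ ((a / b : ℚ)).den ∧ (((a : ℚ) / b : ℚ) : ZMod p) = (a : ZMod p) / (b : ZMod p) := by
  set q : ℚ := (a : ℚ) / b with hq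
  have hden : (q.den : ℤ) ∣ b := by
    rw [hq, ← Rat.divInt_eq_div]
    exact Rat.den_dvd a b
  have hpden : ¬ p ∣ q.den := fun h => hb (dvd_trans (Int.natCast_dvd_natCast.mpr h) hden)
  refine ⟨hpden, ?_⟩
  have hbQ : (b : ℚ) ≠ 0 := Int.cast_ne_zero.mpr hb0
  have hdQ : ((q.den : ℚ)) ≠ 0 := Nat.cast_ne_zero.mpr q.den_ne_zero
  have h1 : (q.num : ℚ) / q.den = (a : ℚ) / b := by rw [Rat.num_div_den]
  rw [div_eq_div_iff hdQ hbQ] at h1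
  have hnum : q.num * b = a * (q.den : ℤ) := by exact_mod_cast h1
  have hdenZ : ((q.den : ℕ) : ZMod p) ≠ 0 := by
    rw [Ne, ZMod.natCast_eq_zero_iff]
    exact hpden
  have hbZ : ((b : ℤ) : ZMod p) ≠ 0 := by
    rw [Ne, ZMod.intCast_zmod_eq_zero_iff_dvd]
    exact hb
  have hcast : (q : ZMod p) = (q.num : ZMod p) / (q.den : ZMod p) := Rat.cast_def q
  rw [hcast, div_eq_div_iff hdenZ hbZ]
  have h2 := congrArg (fun z : ℤ => (z : ZMod p)) hnum
  push_cast at h2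
  linear_combination h2

theorem stmt_5 (p N : ℕ) [Fact p.Prime] (hpN : p + 1 = 4 * N)
    (c : ℕ → ℚ)
    (hc : ∀ m, c m = poch (-1/4) m * poch (1/4) m / (poch (1/2) m * m.factorial)) :
    ∀ j ≤ N, ¬ (p ∣ (c j).den) ∧ ((c j : ZMod p) = ((c (N - j) : ℚ) : ZMod p)) := by
  have hp : p.Prime := Fact.out
  have hp2 : p ≠ 2 := by rintro rfl; omega
  have hp3 : 3 ≤ p := by have := hp.two_le; omega
  have hNp : 2 * N < p := by omega
  have h2N : (N : ZMod p) * 4 = 1 := by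
    have h4 : ((4 * N : ℕ) : ZMod p) = ((p + 1 : ℕ) : ZMod p) := by rw [hpN]
    push_cast [ZMod.natCast_self] at h4
    linear_combination h4
  have key : ∀ m ≤ N, ¬ p ∣ (c m).den ∧
      ((c m : ZMod p)) = (((2 * N).choose (2 * m) : ℕ) : ZMod p) := by
    intro m hm
    set b : ℤ := 4 ^ m * ((2 * m).factorial : ℤ) with hbdef
    have hb0 : b ≠ 0 := by
      have := (2 * m).factorial_pos
      positivity
    have hpbN : ¬ p ∣ 4 ^ m * (2 * m).factorial := by
      intro h
      rcases (Nat.Prime.dvd_mul hp).mp h with h' | h'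
      · rw [show (4 : ℕ) ^ m = 2 ^ (2 * m) by rw [pow_mul]; norm_num] at h'
        have := Nat.le_of_dvd (by norm_num) (hp.dvd_of_dvd_pow h')
        omega
      · have := (Nat.Prime.dvd_factorial hp).mp h'
        omega
    have hpb : ¬ (p : ℤ) ∣ b := by
      rw [hbdef]
      intro h
      apply hpbN
      exact_mod_cast h
    have hcm : c m = ((Eprod (2 * m) : ℤ) : ℚ) / (b : ℚ) := by
      rw [hc m, keyB m, hbdef]
      push_cast
      ring
    obtain ⟨hden, hcast⟩ := castq p (Eprod (2 * m)) b hb0 hpb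
    constructor
    · rw [hcm]; exact hden
    rw [hcm, hcast]
    -- compute the RHS in `ZMod p`
    have hfac0 : (((2 * m).factorial : ℕ) : ZMod p) ≠ 0 := by
      rw [Ne, ZMod.natCast_eq_zero_iff]
      intro h
      have := (Nat.Prime.dvd_factorial hp).mp h
      omega
    have hE : ((Eprod (2 * m) : ℤ) : ZMod p)
        = (2 : ZMod p) ^ (2 * m) * (((2 * N).descFactorial (2 * m) : ℕ) : ZMod p) := by
      have h1 : ((Eprod (2 * m) : ℤ) : ZMod p)
          = ∏ i ∈ Finset.range (2 * m), ((1 : ZMod p) - 2 * (i : ℕ)) := by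
        rw [Eprod]
        push_cast
        rfl
      rw [h1, Nat.descFactorial_eq_prod_range, Nat.cast_prod,
        show (2 : ZMod p) ^ (2 * m) = ∏ _i ∈ Finset.range (2 * m), (2 : ZMod p) by simp,
        ← Finset.prod_mul_distrib]
      apply Finset.prod_congr rfl
      intro i hi
      rw [Finset.mem_range] at hi
      rw [Nat.cast_sub (by omega)]
      push_cast
      linear_combination -h2N
    have hbZ : ((b : ℤ) : ZMod p) ≠ 0 := by
      rw [Ne, ZMod.intCast_zmod_eq_zero_iff_dvd]
      exact hpb
    rw [hE, Nat.descFactorial_eq_factorial_mul_choose, div_eq_iff hbZ]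
    have h24 : (2 : ZMod p) ^ (2 * m) = 4 ^ m := by
      rw [pow_mul]; norm_num
    rw [h24, hbdef]
    push_cast
    ring
  intro j hj
  obtain ⟨hd1, he1⟩ := key j hj
  obtain ⟨_, he2⟩ := key (N - j) (Nat.sub_le N j)
  refine ⟨hd1, ?_⟩
  rw [he1, he2]
  congr 1
  have h1 : 2 * (N - j) = 2 * N - 2 * j := by omega
  rw [h1, Nat.choose_symm (by omega)]
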